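/- Let a : ℕ → ℂ with a(0) ≠ 0, and let g = ∑_{n≥0} a(n) Xⁿ be the corresponding formal power series over ℂ. Then for every n ≥ 0, the coefficient b(n) of Xⁿ in the multiplicative inverse power series g⁻¹ is given by the finite sum over compositions: b(n) = a(0)⁻¹ · ∑_{c∈C, |c|=n} ∏_{j a part of c} (−a(j)/a(0)), where the product is over the parts j of c counted with multiplicity (the empty composition contributing the empty product 1). -/

import Mathlib

open Finset

lemma comp_blocks_ne_nil {n : ℕ} (c : Composition (n + 1)) : c.blocks ≠ [] := by
  intro h
  have := c.blocks_sum
  simp [h] at this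

lemma comp_head_le {n : ℕ} (c : Composition (n + 1)) :
    1 ≤ c.blocks.head (comp_blocks_ne_nil c) ∧
      c.blocks.head (comp_blocks_ne_nil c) + c.blocks.tail.sum = n + 1 := by
  constructor
  · exact c.one_le_blocks (List.head_mem _)
  · have h2 := List.cons_head_tail (comp_blocks_ne_nil c)
    calc c.blocks.head (comp_blocks_ne_nil c) + c.blocks.tail.sum
        = (c.blocks.head (comp_blocks_ne_nil c) :: c.blocks.tail).sum := (List.sum_cons).symm
      _ = c.blocks.sum := by rw [h2]
      _ = n + 1 := c.blocks_sum

/-- Splitting off the first block of a composition of `n+1`. -/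
def compSplitEquiv (n : ℕ) : Composition (n + 1) ≃ Σ j : Fin (n + 1), Composition (n - j) where
  toFun c :=
    ⟨⟨c.blocks.head (comp_blocks_ne_nil c) - 1, by
        have h := comp_head_le c
        have := Composition.blocks_sum c
        omega⟩,
      ⟨c.blocks.tail,
        fun hi => c.blocks_pos (List.mem_of_mem_tail hi), by
        have h := comp_head_le c
        simp only
        omega⟩⟩
  invFun p :=
    ⟨((p.1 : ℕ) + 1) :: p.2.blocks, by
      intro i hi
      rcases List.mem_cons.1 hi with h | h
      · omega
      · exact p.2.blocks_pos h, by
      have h := p.2.blocks_sum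
      have hj := p.1.isLt
      simp only [List.sum_cons]
      omega⟩
  left_inv c := by
    have h := comp_head_le c
    apply Composition.ext
    simp only
    rw [show c.blocks.head (comp_blocks_ne_nil c) - 1 + 1
        = c.blocks.head (comp_blocks_ne_nil c) from by omega]
    exact List.cons_head_tail (comp_blocks_ne_nil c)
  right_inv p := rfl

lemma compSum_rec (f : ℕ → ℂ) (n : ℕ) :
    ∑ c : Composition (n + 1), (c.blocks.map f).prod
      = ∑ j : Fin (n + 1), f ((j : ℕ) + 1) *
          ∑ c : Composition (n - j), (c.blocks.map f).prod := by
  rw [← (compSplitEquiv n).symm.sum_comp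
    (fun c : Composition (n+1) => (c.blocks.map f).prod)]
  rw [← Finset.univ_sigma_univ, Finset.sum_sigma]
  refine Finset.sum_congr rfl fun j _ => ?_
  rw [Finset.mul_sum]
  refine Finset.sum_congr rfl fun c _ => ?_
  show ((((j : ℕ) + 1) :: c.blocks).map f).prod = _
  simp

lemma compSum_zero (f : ℕ → ℂ) :
    ∑ c : Composition 0, (c.blocks.map f).prod = 1 := by
  have h : ∀ c : Composition 0, c.blocks = [] := by
    intro c
    have hs := c.blocks_sum
    cases hb : c.blocks with
    | nil => rfl
    | cons x t =>
      exfalso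
      have hx : 0 < x := c.blocks_pos (by rw [hb]; exact List.mem_cons_self)
      rw [hb] at hs
      simp at hs
      omega
  have h1 : ∀ c : Composition 0, (c.blocks.map f).prod = 1 := by
    intro c; rw [h c]; simp
  rw [Finset.sum_congr rfl fun c _ => h1 c, Finset.sum_const, Finset.card_univ,
    composition_card]
  norm_num

/-- **Lemma (Salem; Schneider–Sills).** If `g = ∑ a(n) Xⁿ` with `a(0) ≠ 0`, then the
`n`-th coefficient of `1/g` is `a(0)⁻¹ ∑_{|c|=n} ∏_{j part of c} (-a(j)/a(0))`,
the sum being over all compositions of `n`. -/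
theorem reciprocal_power_series_coeff_eq_composition_sum
    (a : ℕ → ℂ) (ha : a 0 ≠ 0) (n : ℕ) :
    PowerSeries.coeff n (PowerSeries.mk a)⁻¹
      = (a 0)⁻¹ * ∑ c : Composition n, (c.blocks.map (fun j => -a j / a 0)).prod := by
  induction n using Nat.strong_induction_on with
  | _ n ih =>
    rw [PowerSeries.coeff_inv]
    rcases n with _ | m
    · simp [compSum_zero, PowerSeries.constantCoeff_mk]
    · simp only [Nat.succ_ne_zero, if_false, PowerSeries.constantCoeff_mk]
      rw [Finset.Nat.sum_antidiagonal_eq_sum_range_succ_mk]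
      have hstep : ∀ i ∈ Finset.range (m + 2),
          (if (m + 1 - i, m + 1 - i).2 < m + 1 then
            PowerSeries.coeff i (PowerSeries.mk a) *
              PowerSeries.coeff (m + 1 - i) (PowerSeries.mk a)⁻¹ else 0)
          = if i = 0 then 0 else
              a i * ((a 0)⁻¹ * ∑ c : Composition (m + 1 - i),
                (c.blocks.map (fun j => -a j / a 0)).prod) := by
        intro i hi
        rcases Nat.eq_zero_or_pos i with rfl | hipos
        · simp
        · have h1 : m + 1 - i < m + 1 := by omega
          rw [if_pos h1, if_neg (by omega), PowerSeries.coeff_mk,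
            ih (m + 1 - i) h1]
      rw [Finset.sum_congr rfl hstep]
      rw [compSum_rec (fun j => -a j / a 0) m]
      rw [Finset.sum_range_succ']
      simp only [eq_self_iff_true, if_true, add_zero, Nat.succ_ne_zero, if_false]
      rw [Fin.sum_univ_eq_sum_range
        (fun x => -a (x + 1) / a 0 *
          ∑ c : Composition (m - x), (List.map (fun j => -a j / a 0) c.blocks).prod) (m + 1)]
      rw [Finset.mul_sum, Finset.mul_sum]
      refine Finset.sum_congr rfl fun i hi => ?_
      have h2 : m + 1 - (i + 1) = m - i := by omega
      rw [h2]
      ring
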